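/- arXiv:1210.0833 — 3 statements merged into one kernel-verified Lean document; each statement's English description precedes it below -/
import Mathlib

section
/- Let X and Y be topological spaces with X Baire, and let f : X → Y be a continuous map such that the image under f of every nonempty open subset of X is somewhere dense in Y. Then the image under f of every non-meager subset of X is non-meager in Y; equivalently, the preimage under f of every meager subset of Y is meager in X, and the preimage under f of every comeager subset of Y is comeager in X. -/
open Topology Set Filter

lemma preimage_nowhereDense_aux {X Y : Type*} [TopologicalSpace X]
    [TopologicalSpace Y] (f : X → Y) (hf : Continuous f)
    (hsd : ∀ U : Set X, IsOpen U → U.Nonempty → (interior (closure (f '' U))).Nonempty)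
    {N : Set Y} (hN : IsNowhereDense N) : IsNowhereDense (f ⁻¹' N) := by
  rw [IsNowhereDense] at hN ⊢
  by_contra h
  -- interior (closure (f ⁻¹' N)) nonempty
  have hne : (interior (closure (f ⁻¹' N))).Nonempty := nonempty_iff_ne_empty.2 h
  set U := interior (closure (f ⁻¹' N)) with hU
  have hUopen : IsOpen U := isOpen_interior
  have hUsub : U ⊆ f ⁻¹' (closure N) := by
    calc U ⊆ closure (f ⁻¹' N) := interior_subset
    _ ⊆ f ⁻¹' (closure N) := hf.closure_preimage_subset N
  obtain ⟨y, hy⟩ := hsd U hUopen hne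
  have h1 : f '' U ⊆ closure N := image_subset_iff.2 hUsub
  have h2 : closure (f '' U) ⊆ closure N := closure_minimal h1 isClosed_closure
  have h3 : interior (closure (f '' U)) ⊆ interior (closure N) :=
    interior_mono h2
  exact absurd (h3 hy) (by simp [hN])

lemma preimage_meagre_aux {X Y : Type*} [TopologicalSpace X]
    [TopologicalSpace Y] (f : X → Y) (hf : Continuous f)
    (hsd : ∀ U : Set X, IsOpen U → U.Nonempty → (interior (closure (f '' U))).Nonempty)
    {B : Set Y} (hB : IsMeagre B) : IsMeagre (f ⁻¹' B) := by
  rw [isMeagre_iff_countable_union_isNowhereDense] at hB ⊢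
  obtain ⟨S, hSnd, hScnt, hBsub⟩ := hB
  refine ⟨(fun t => f ⁻¹' t) '' S, ?_, hScnt.image _, ?_⟩
  · rintro t ⟨s, hs, rfl⟩
    exact preimage_nowhereDense_aux f hf hsd (hSnd s hs)
  · intro x hx
    obtain ⟨t, ht, hxt⟩ := hBsub hx
    exact ⟨f ⁻¹' t, mem_image_of_mem _ ht, hxt⟩

/-- If `f : X → Y` is continuous, `X` is Baire, and images of nonempty open sets are somewhere
dense, then images of non-meager sets are non-meager; equivalently preimages of meager sets are
meager and preimages of comeager sets are comeager. -/
theorem image_nonmeager_of_open_somewhere_dense {X Y : Type*} [TopologicalSpace X]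
    [TopologicalSpace Y] [BaireSpace X] (f : X → Y) (hf : Continuous f)
    (hsd : ∀ U : Set X, IsOpen U → U.Nonempty → (interior (closure (f '' U))).Nonempty) :
    (∀ A : Set X, ¬ IsMeagre A → ¬ IsMeagre (f '' A)) ∧
    (∀ B : Set Y, IsMeagre B → IsMeagre (f ⁻¹' B)) ∧
    (∀ B : Set Y, B ∈ residual Y → f ⁻¹' B ∈ residual X) := by
  have key : ∀ {B : Set Y}, IsMeagre B → IsMeagre (f ⁻¹' B) := fun h => preimage_meagre_aux f hf hsd h
  refine ⟨fun A hA hmA => hA ((key hmA).mono (subset_preimage_image f A)), fun B => key,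
    fun B hB => ?_⟩
  have : IsMeagre (f ⁻¹' Bᶜ) := key (by rwa [IsMeagre, compl_compl])
  rwa [preimage_compl, IsMeagre, compl_compl] at this
end

section
/- Let G be a Polish group and let H be a closed abelian subgroup of G. Then the set L_H of all one-parameter subgroups X of G with image(X) ⊆ H is a closed subset of the space 𝓛(G) of one-parameter subgroups of G, and L_H, with addition (X + Y)(t) = X(t)Y(t) and scalar multiplication (rX)(t) = X(rt) for r ∈ ℝ, is a separable F-space, i.e. a topological vector space over ℝ whose topology is induced by a complete metric and is separable. -/
noncomputable section

open Topology Set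

/-- The space `𝓛(G)` of one-parameter subgroups of `G`, i.e. continuous homomorphisms
`ℝ → G`, as a subspace of `C(ℝ, G)` with the compact-open topology. -/
def OneParam (G : Type*) [TopologicalSpace G] [Group G] : Set C(ℝ, G) :=
  {X | ∀ s t : ℝ, X (s + t) = X s * X t}

/-- The scalar action of `ℝ` on `𝓛(G)`: `(rX)(t) = X(rt)`. -/
def oneParamSMul (G : Type*) [TopologicalSpace G] [Group G] (r : ℝ) (X : OneParam G) :
    OneParam G :=
  ⟨X.1.comp ⟨fun t => r * t, by fun_prop⟩, fun s t => by
    simp only [ContinuousMap.comp_apply, ContinuousMap.coe_mk]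
    rw [mul_add]
    exact X.2 _ _⟩

/-- The evaluation map `e : 𝓛(G) → G`, `e(X) = X(1)`. -/
def oneParamEval (G : Type*) [TopologicalSpace G] [Group G] (X : OneParam G) : G := X.1 1


/-- The set of one-parameter subgroups of `G` with image in a fixed closed abelian subgroup
`H`. -/
def LH (G : Type*) [TopologicalSpace G] [Group G] (H : Subgroup G) : Set (OneParam G) :=
  {X | ∀ t : ℝ, (X : C(ℝ, G)) t ∈ H}

section Aux
variable {G : Type*} [TopologicalSpace G] [Group G] [IsTopologicalGroup G] {H : Subgroup G}

/-- Addition on `L_H`: pointwise product. -/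
def LHadd (hHab : ∀ x ∈ H, ∀ y ∈ H, x * y = y * x) (X Y : LH G H) : LH G H :=
  ⟨⟨X.1.1 * Y.1.1, fun s t => by
      simp only [ContinuousMap.mul_apply, X.1.2 s t, Y.1.2 s t]
      rw [mul_assoc, mul_assoc, ← mul_assoc (X.1.1 t), hHab _ (X.2 t) _ (Y.2 s), mul_assoc]⟩,
    fun t => H.mul_mem (X.2 t) (Y.2 t)⟩

/-- Zero of `L_H`: the constant map `1`. -/
def LHzero : LH G H := ⟨⟨1, fun _ _ => by simp⟩, fun _ => H.one_mem⟩

/-- Negation on `L_H`: pointwise inverse. -/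
def LHneg (hHab : ∀ x ∈ H, ∀ y ∈ H, x * y = y * x) (X : LH G H) : LH G H :=
  ⟨⟨(X.1.1)⁻¹, fun s t => by
      simp only [ContinuousMap.inv_apply, X.1.2 s t, mul_inv_rev]
      exact hHab _ (H.inv_mem (X.2 t)) _ (H.inv_mem (X.2 s))⟩,
    fun t => H.inv_mem (X.2 t)⟩

/-- Scalar multiplication on `L_H`: `(rX)(t) = X(rt)`. -/
def LHsmul (r : ℝ) (X : LH G H) : LH G H :=
  ⟨oneParamSMul G r X.1, fun t => X.2 (r * t)⟩

omit [IsTopologicalGroup G] in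
theorem LHext (X Y : LH G H) (h : ∀ t : ℝ, X.1.1 t = Y.1.1 t) : X = Y :=
  Subtype.ext (Subtype.ext (ContinuousMap.ext h))

end Aux

/-- For a Polish group `G` and a closed abelian subgroup `H ≤ G`, the set `L_H` of
one-parameter subgroups with image in `H` is closed in `𝓛(G)`, and, under pointwise
product as addition and `(rX)(t) = X(rt)` as scalar multiplication, it is a separable
F-space (i.e. a Polish topological vector space over `ℝ`). -/
theorem LH_closed_and_separable_Fspace (G : Type*) [TopologicalSpace G] [Group G]
    [IsTopologicalGroup G] [PolishSpace G] (H : Subgroup G) (hHcl : IsClosed (H : Set G))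
    (hHab : ∀ x ∈ H, ∀ y ∈ H, x * y = y * x) :
    IsClosed (LH G H) ∧
    ∃ (add : LH G H → LH G H → LH G H) (zero : LH G H) (neg : LH G H → LH G H)
      (smul : ℝ → LH G H → LH G H),
      (∀ (X Y : LH G H) (t : ℝ), (add X Y).1.1 t = X.1.1 t * Y.1.1 t) ∧
      (∀ (r : ℝ) (X : LH G H) (t : ℝ), (smul r X).1.1 t = X.1.1 (r * t)) ∧
      (∀ X Y Z : LH G H, add (add X Y) Z = add X (add Y Z)) ∧
      (∀ X Y : LH G H, add X Y = add Y X) ∧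
      (∀ X : LH G H, add zero X = X) ∧
      (∀ X : LH G H, add (neg X) X = zero) ∧
      (∀ (r : ℝ) (X Y : LH G H), smul r (add X Y) = add (smul r X) (smul r Y)) ∧
      (∀ (r s : ℝ) (X : LH G H), smul (r + s) X = add (smul r X) (smul s X)) ∧
      (∀ (r s : ℝ) (X : LH G H), smul (r * s) X = smul r (smul s X)) ∧
      (∀ X : LH G H, smul 1 X = X) ∧
      Continuous (fun p : LH G H × LH G H => add p.1 p.2) ∧
      Continuous (fun p : ℝ × LH G H => smul p.1 p.2) ∧
      PolishSpace (LH G H) := by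
  have hcl : IsClosed (LH G H) := by
    have : LH G H = ⋂ t : ℝ, (fun X : OneParam G => (X : C(ℝ, G)) t) ⁻¹' (H : Set G) := by
      ext X; simp [LH, Set.mem_iInter]
    rw [this]
    exact isClosed_iInter fun t =>
      hHcl.preimage ((continuous_eval_const t).comp continuous_subtype_val)
  refine ⟨hcl, LHadd hHab, LHzero, LHneg hHab, LHsmul, fun _ _ _ => rfl, fun _ _ _ => rfl,
    ?_, ?_, ?_, ?_, ?_, ?_, ?_, ?_, ?_, ?_, ?_⟩
  · exact fun X Y Z => LHext _ _ fun t => mul_assoc _ _ _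
  · exact fun X Y => LHext _ _ fun t => hHab _ (X.2 t) _ (Y.2 t)
  · exact fun X => LHext _ _ fun t => one_mul _
  · exact fun X => LHext _ _ fun t => inv_mul_cancel _
  · exact fun r X Y => LHext _ _ fun t => rfl
  · exact fun r s X => LHext _ _ fun t => by
      show X.1.1 ((r + s) * t) = X.1.1 (r * t) * X.1.1 (s * t)
      rw [add_mul]; exact X.1.2 _ _
  · exact fun r s X => LHext _ _ fun t => by
      show X.1.1 ((r * s) * t) = X.1.1 (s * (r * t))
      ring_nf
  · exact fun X => LHext _ _ fun t => by
      show X.1.1 (1 * t) = X.1.1 t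
      rw [one_mul]
  · -- continuity of addition
    apply Continuous.subtype_mk
    apply Continuous.subtype_mk
    exact (continuous_subtype_val.comp (continuous_subtype_val.comp continuous_fst)).mul
      (continuous_subtype_val.comp (continuous_subtype_val.comp continuous_snd))
  · -- continuity of scalar multiplication
    apply Continuous.subtype_mk
    apply Continuous.subtype_mk
    have hm : Continuous fun r : ℝ => (⟨fun t => r * t, by fun_prop⟩ : C(ℝ, ℝ)) :=
      ContinuousMap.continuous_of_continuous_uncurry _ (by
        have : (Function.uncurry fun (r : ℝ) (t : ℝ) =>
            ((⟨fun t => r * t, by fun_prop⟩ : C(ℝ, ℝ)) t)) = fun p : ℝ × ℝ => p.1 * p.2 := rfl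
        exact continuous_mul)
    exact ContinuousMap.continuous_comp'.comp
      ((hm.comp continuous_fst).prodMk
        (continuous_subtype_val.comp (continuous_subtype_val.comp continuous_snd)))
  · -- Polishness
    letI := TopologicalSpace.upgradeIsCompletelyMetrizable G
    haveI : PolishSpace C(ℝ, G) := inferInstance
    have hOP : IsClosed (OneParam G) := by
      have : OneParam G = ⋂ (s : ℝ) (t : ℝ), {X : C(ℝ, G) | X (s + t) = X s * X t} := by
        ext X; simp [OneParam, Set.mem_iInter]
      rw [this]
      exact isClosed_iInter fun s => isClosed_iInter fun t =>
        isClosed_eq (continuous_eval_const _)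
          ((continuous_eval_const s).mul (continuous_eval_const t))
    haveI : PolishSpace (OneParam G) := hOP.polishSpace
    exact hcl.polishSpace

end
end

section
/- Let G be a Polish group. Then: (1) the space 𝓛(G) of one-parameter subgroups of G, with the topology inherited from the compact-open topology on continuous functions ℝ → G, is a Polish space; (2) the map ℝ × 𝓛(G) → 𝓛(G), (r, X) ↦ rX where (rX)(t) = X(rt), is a continuous action of ℝ on 𝓛(G); (3) the evaluation map e : 𝓛(G) → G given by e(X) = X(1) is continuous. -/
noncomputable section

open Topology Set

theorem oneParam_isClosed (G : Type*) [TopologicalSpace G] [Group G] [IsTopologicalGroup G]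
    [T2Space G] : IsClosed (OneParam G) := by
  have : OneParam G = ⋂ (s : ℝ) (t : ℝ), {X : C(ℝ, G) | X (s + t) = X s * X t} := by
    ext X; simp [OneParam]
  rw [this]
  refine isClosed_iInter fun s => isClosed_iInter fun t => isClosed_eq ?_ ?_
  · exact continuous_eval_const _
  · exact ((continuous_eval_const s).mul
      (continuous_eval_const t))

/-- For a Polish group `G`: (1) the space `𝓛(G)` of one-parameter subgroups with the
compact-open topology is Polish; (2) `(r, X) ↦ rX`, `(rX)(t) = X(rt)`, is a continuous action
of `ℝ` on `𝓛(G)`; (3) the evaluation `e(X) = X(1)` is continuous. -/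
theorem oneParam_polish_continuous_action_eval (G : Type*) [TopologicalSpace G] [Group G]
    [IsTopologicalGroup G] [PolishSpace G] :
    PolishSpace (OneParam G) ∧
    (Continuous (fun p : ℝ × OneParam G => oneParamSMul G p.1 p.2) ∧
      (∀ X : OneParam G, oneParamSMul G 1 X = X) ∧
      (∀ (r s : ℝ) (X : OneParam G),
        oneParamSMul G (r * s) X = oneParamSMul G r (oneParamSMul G s X))) ∧
    Continuous (oneParamEval G) := by
  refine ⟨?_, ⟨?_, ?_, ?_⟩, ?_⟩
  · -- Polish
    letI := TopologicalSpace.upgradeIsCompletelyMetrizable G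
    haveI : PolishSpace C(ℝ, G) := inferInstance
    exact (oneParam_isClosed G).polishSpace
  · -- continuity of the action
    have hmul : Continuous fun r : ℝ => (ContinuousMap.curry ⟨fun p : ℝ × ℝ => p.1 * p.2,
        by fun_prop⟩ : C(ℝ, C(ℝ, ℝ))) r := (ContinuousMap.curry _).continuous
    have : Continuous fun p : ℝ × OneParam G =>
        ((p.2 : C(ℝ, G)).comp ⟨fun t => p.1 * t, by fun_prop⟩ : C(ℝ, G)) := by
      have h2 : Continuous fun p : ℝ × OneParam G => (p.2 : C(ℝ, G)) :=
        continuous_subtype_val.comp continuous_snd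
      have := ContinuousMap.continuous_comp'.comp
        ((hmul.comp continuous_fst).prodMk h2)
      exact this
    exact Continuous.subtype_mk this _
  · intro X
    apply Subtype.ext
    ext t
    show X.1 (1 * t) = X.1 t
    rw [one_mul]
  · intro r s X
    apply Subtype.ext
    ext t
    show X.1 ((r * s) * t) = X.1 (s * (r * t))
    ring_nf
  · exact (continuous_eval_const 1).comp continuous_subtype_val

end
end
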